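/- For all finite graphs G₁ and G₂, the queue-number of the cartesian product satisfies qn(G₁ □ G₂) ≤ qn(G₁) + sqn(G₂). -/

import Mathlib

open SimpleGraph

/-- Two (unordered) pairs of vertices cross with respect to the strict order `lt`:
with `e = {v,w}`, `f = {x,y}`, `v ≺ w`, `x ≺ y`, they cross if
`v ≺ x ≺ w ≺ y` or `x ≺ v ≺ y ≺ w`. -/
def Cross {V : Type*} (lt : V → V → Prop) (e f : Sym2 V) : Prop :=
  ∃ v w x y : V, e = s(v, w) ∧ f = s(x, y) ∧
    ((lt v x ∧ lt x w ∧ lt w y) ∨ (lt x v ∧ lt v y ∧ lt y w))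

/-- Two (unordered) pairs of vertices nest with respect to the strict order `lt`:
with `e = {v,w}`, `f = {x,y}`, `v ≺ w`, `x ≺ y`, they nest if
`v ≺ x ≺ y ≺ w` or `x ≺ v ≺ w ≺ y`. -/
def Nest {V : Type*} (lt : V → V → Prop) (e f : Sym2 V) : Prop :=
  ∃ v w x y : V, e = s(v, w) ∧ f = s(x, y) ∧
    ((lt v x ∧ lt x y ∧ lt y w) ∨ (lt x v ∧ lt v w ∧ lt w y))

/-- `(lt, φ)` is a `k`-stack layout of `G`: `lt` is a linear (strict total) order on the
vertices and no two edges with the same colour cross. -/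
def IsStackLayout {V : Type*} {k : ℕ} (G : SimpleGraph V)
    (lt : V → V → Prop) (φ : Sym2 V → Fin k) : Prop :=
  IsStrictTotalOrder V lt ∧
    ∀ e ∈ G.edgeSet, ∀ f ∈ G.edgeSet, φ e = φ f → ¬ Cross lt e f

/-- `(lt, φ)` is a `k`-queue layout of `G`: `lt` is a linear (strict total) order on the
vertices and no two edges with the same colour nest. -/
def IsQueueLayout {V : Type*} {k : ℕ} (G : SimpleGraph V)
    (lt : V → V → Prop) (φ : Sym2 V → Fin k) : Prop :=
  IsStrictTotalOrder V lt ∧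
    ∀ e ∈ G.edgeSet, ∀ f ∈ G.edgeSet, φ e = φ f → ¬ Nest lt e f

/-- The stack-number of `G`: the least `k` such that `G` has a `k`-stack layout. -/
noncomputable def stackNumber {V : Type*} (G : SimpleGraph V) : ℕ :=
  sInf {k | ∃ (lt : V → V → Prop) (φ : Sym2 V → Fin k), IsStackLayout G lt φ}

/-- The queue-number of `G`: the least `k` such that `G` has a `k`-queue layout. -/
noncomputable def queueNumber {V : Type*} (G : SimpleGraph V) : ℕ :=
  sInf {k | ∃ (lt : V → V → Prop) (φ : Sym2 V → Fin k), IsQueueLayout G lt φ}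

/-- A queue layout is strict if for every vertex `u` and neighbours `v, w` of `u` with
`u ≺ v ≺ w` or `v ≺ w ≺ u`, the edges `uv` and `uw` get different colours. -/
def IsStrictQueueLayout {V : Type*} {k : ℕ} (G : SimpleGraph V)
    (lt : V → V → Prop) (φ : Sym2 V → Fin k) : Prop :=
  IsQueueLayout G lt φ ∧
    ∀ u v w : V, G.Adj u v → G.Adj u w →
      ((lt u v ∧ lt v w) ∨ (lt v w ∧ lt w u)) → φ s(u, v) ≠ φ s(u, w)

/-- The strict queue-number of `G`. -/
noncomputable def strictQueueNumber {V : Type*} (G : SimpleGraph V) : ℕ :=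
  sInf {k | ∃ (lt : V → V → Prop) (φ : Sym2 V → Fin k), IsStrictQueueLayout G lt φ}

/-- A stack layout is dispersable if the colouring is a proper edge-colouring. -/
def IsDispersableStackLayout {V : Type*} {k : ℕ} (G : SimpleGraph V)
    (lt : V → V → Prop) (φ : Sym2 V → Fin k) : Prop :=
  IsStackLayout G lt φ ∧
    ∀ u v w : V, G.Adj u v → G.Adj u w → v ≠ w → φ s(u, v) ≠ φ s(u, w)

/-- The dispersable stack-number of `G`. -/
noncomputable def dispersableStackNumber {V : Type*} (G : SimpleGraph V) : ℕ :=
  sInf {k | ∃ (lt : V → V → Prop) (φ : Sym2 V → Fin k), IsDispersableStackLayout G lt φ}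

/-- The star `S_b` with root `none` and leaves `some i`, `i : Fin b`. -/
def starGraph (b : ℕ) : SimpleGraph (Option (Fin b)) :=
  SimpleGraph.fromRel (fun v w => v = none ∧ w ≠ none)

/-- The triangulated grid `H_n` on vertex set `Fin n × Fin n` (0-indexed), with horizontal
edges `(x,y)(x+1,y)`, vertical edges `(x,y)(x,y+1)` and diagonal edges `(x,y)(x+1,y+1)`. -/
def triGrid (n : ℕ) : SimpleGraph (Fin n × Fin n) :=
  SimpleGraph.fromRel (fun p q =>
    ((p.1 : ℕ) + 1 = (q.1 : ℕ) ∧ p.2 = q.2) ∨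
    (p.1 = q.1 ∧ (p.2 : ℕ) + 1 = (q.2 : ℕ)) ∨
    ((p.1 : ℕ) + 1 = (q.1 : ℕ) ∧ (p.2 : ℕ) + 1 = (q.2 : ℕ)))



lemma stmt13_not_nest_self {V : Type*} {lt : V → V → Prop} (h : IsStrictTotalOrder V lt)
    (e : Sym2 V) : ¬ Nest lt e e := by
  haveI := h
  rintro ⟨v, w, x, y, he, hf, hc⟩
  rw [he, Sym2.eq_iff] at hf
  rcases hf with ⟨rfl, rfl⟩ | ⟨rfl, rfl⟩ <;> rcases hc with ⟨h1, h2, h3⟩ | ⟨h1, h2, h3⟩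
  · exact irrefl_of lt _ h1
  · exact irrefl_of lt _ h1
  · exact irrefl_of lt _ (trans_of lt h1 h2)
  · exact irrefl_of lt _ (trans_of lt h1 h2)

lemma stmt13_exists_strict {V : Type*} [Fintype V] (G : SimpleGraph V) :
    {k | ∃ (lt : V → V → Prop) (φ : Sym2 V → Fin k), IsStrictQueueLayout G lt φ}.Nonempty := by
  classical
  refine ⟨Fintype.card (Sym2 V), WellOrderingRel, fun e => Fintype.equivFin (Sym2 V) e, ?_, ?_⟩
  · refine ⟨inferInstance, ?_⟩
    intro e _ f _ hφ
    have : e = f := (Fintype.equivFin (Sym2 V)).injective hφ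
    subst this
    exact stmt13_not_nest_self inferInstance e
  · intro u v w _ _ hlt hφ
    have hne : s(u, v) ≠ s(u, w) := by
      intro h
      rw [Sym2.eq_iff] at h
      rcases h with ⟨-, rfl⟩ | ⟨rfl, rfl⟩
      · rcases hlt with ⟨h1, h2⟩ | ⟨h1, h2⟩
        · exact irrefl_of WellOrderingRel _ h2
        · exact irrefl_of WellOrderingRel _ h1
      · rcases hlt with ⟨h1, h2⟩ | ⟨h1, h2⟩
        · exact irrefl_of WellOrderingRel _ (trans_of WellOrderingRel h1 h2)
        · exact irrefl_of WellOrderingRel _ (trans_of WellOrderingRel h1 h2)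
    exact hne ((Fintype.equivFin (Sym2 V)).injective hφ)

/-- the product order -/
def stmt13_lt {V₁ V₂ : Type*} (lt₁ : V₁ → V₁ → Prop) (lt₂ : V₂ → V₂ → Prop) :
    V₁ × V₂ → V₁ × V₂ → Prop :=
  fun p q => lt₂ p.2 q.2 ∨ (p.2 = q.2 ∧ lt₁ p.1 q.1)

open Classical in
/-- the product colouring -/
noncomputable def stmt13_phi {V₁ V₂ : Type*} {a b : ℕ}
    (φ₁ : Sym2 V₁ → Fin a) (φ₂ : Sym2 V₂ → Fin b) : Sym2 (V₁ × V₂) → Fin (a + b) :=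
  fun e =>
    if (Sym2.map Prod.snd e).IsDiag then Fin.castAdd b (φ₁ (Sym2.map Prod.fst e))
    else Fin.natAdd a (φ₂ (Sym2.map Prod.snd e))

lemma stmt13_sto {V₁ V₂ : Type*} {lt₁ : V₁ → V₁ → Prop} {lt₂ : V₂ → V₂ → Prop}
    (h₁ : IsStrictTotalOrder V₁ lt₁) (h₂ : IsStrictTotalOrder V₂ lt₂) :
    IsStrictTotalOrder (V₁ × V₂) (stmt13_lt lt₁ lt₂) := by
  haveI := h₁; haveI := h₂
  refine { trichotomous := ?_, irrefl := ?_, trans := ?_ }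
  · intro p q hpq hqp
    rcases trichotomous_of lt₂ p.2 q.2 with h | h | h
    · exact (hpq (Or.inl h)).elim
    · rcases trichotomous_of lt₁ p.1 q.1 with h' | h' | h'
      · exact (hpq (Or.inr ⟨h, h'⟩)).elim
      · exact Prod.ext h' h
      · exact (hqp (Or.inr ⟨h.symm, h'⟩)).elim
    · exact (hqp (Or.inl h)).elim
  · rintro p (h | ⟨-, h⟩)
    · exact irrefl_of lt₂ _ h
    · exact irrefl_of lt₁ _ h
  · rintro p q r (h | ⟨he, h⟩) (h' | ⟨he', h'⟩)
    · exact Or.inl (trans_of lt₂ h h')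
    · exact Or.inl (he' ▸ h)
    · exact Or.inl (he ▸ h')
    · exact Or.inr ⟨he.trans he', trans_of lt₁ h h'⟩

lemma stmt13_cycle {V : Type*} {lt : V → V → Prop} (I : IsStrictTotalOrder V lt)
    {A B C : V} (h1 : lt A B ∨ A = B) (h2 : lt B C ∨ B = C) (h3 : lt C A ∨ C = A) :
    A = B ∧ B = C := by
  haveI := I
  rcases h1 with h1 | h1 <;> rcases h2 with h2 | h2 <;> rcases h3 with h3 | h3
  · exact absurd (trans_of lt (trans_of lt h1 h2) h3) (irrefl_of lt _)
  · rw [h3] at h2; exact absurd (trans_of lt h1 h2) (irrefl_of lt _)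
  · rw [h2] at h1; exact absurd (trans_of lt h1 h3) (irrefl_of lt _)
  · rw [h2, ← h3] at h1; exact absurd h1 (irrefl_of lt _)
  · rw [h1] at h3; exact absurd (trans_of lt h2 h3) (irrefl_of lt _)
  · rw [h1] at h3; rw [h3] at h2; exact absurd h2 (irrefl_of lt _)
  · rw [h1, h2] at h3; exact absurd h3 (irrefl_of lt _)
  · exact ⟨h1, h2⟩

lemma stmt13_key {V₁ V₂ : Type*} {a b : ℕ} {G₁ : SimpleGraph V₁} {G₂ : SimpleGraph V₂}
    {lt₁ : V₁ → V₁ → Prop} {lt₂ : V₂ → V₂ → Prop}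
    {φ₁ : Sym2 V₁ → Fin a} {φ₂ : Sym2 V₂ → Fin b}
    (hQ₁ : IsQueueLayout G₁ lt₁ φ₁) (hQ₂ : IsStrictQueueLayout G₂ lt₂ φ₂)
    (e f : Sym2 (V₁ × V₂)) (he : e ∈ (G₁ □ G₂).edgeSet) (hf : f ∈ (G₁ □ G₂).edgeSet)
    (hφ : stmt13_phi φ₁ φ₂ e = stmt13_phi φ₁ φ₂ f)
    (v w x y : V₁ × V₂) (hev : e = s(v, w)) (hfx : f = s(x, y))
    (h1 : stmt13_lt lt₁ lt₂ v x) (h2 : stmt13_lt lt₁ lt₂ x y)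
    (h3 : stmt13_lt lt₁ lt₂ y w) : False := by
  classical
  haveI I₁ := hQ₁.1
  haveI I₂ := hQ₂.1.1
  subst hev hfx
  rw [SimpleGraph.mem_edgeSet, boxProd_adj] at he hf
  rcases he with ⟨hA₁, hcol⟩ | ⟨hA₂, hu⟩
  · -- e is a G₁-edge: v.2 = w.2
    have hcyc := stmt13_cycle I₂ (A := v.2) (B := x.2) (C := y.2)
      (by rcases h1 with h | ⟨h, -⟩; exacts [Or.inl h, Or.inr h])
      (by rcases h2 with h | ⟨h, -⟩; exacts [Or.inl h, Or.inr h])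
      (by rcases h3 with h | ⟨h, -⟩
          · exact Or.inl (hcol ▸ h)
          · exact Or.inr (h.trans hcol.symm))
    obtain ⟨hx2, hy2⟩ := hcyc
    have l1 : lt₁ v.1 x.1 := by
      rcases h1 with h | ⟨-, h⟩
      · exact absurd h (by rw [hx2]; exact irrefl_of lt₂ _)
      · exact h
    have l2 : lt₁ x.1 y.1 := by
      rcases h2 with h | ⟨-, h⟩
      · exact absurd h (by rw [hy2]; exact irrefl_of lt₂ _)
      · exact h
    have l3 : lt₁ y.1 w.1 := by
      have hyw : y.2 = w.2 := ((hx2.trans hy2).symm).trans hcol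
      rcases h3 with h | ⟨-, h⟩
      · exact absurd h (by rw [hyw]; exact irrefl_of lt₂ _)
      · exact h
    have hfcol : x.2 = y.2 := hy2
    have hfG₁ : G₁.Adj x.1 y.1 := by
      rcases hf with ⟨h, -⟩ | ⟨hadj, -⟩
      · exact h
      · exact absurd (hfcol ▸ hadj) (G₂.loopless.irrefl _)
    have hφ' : φ₁ s(v.1, w.1) = φ₁ s(x.1, y.1) := by
      simp only [stmt13_phi, Sym2.map_pair_eq] at hφ
      rw [if_pos (Sym2.mk_isDiag_iff.2 hcol), if_pos (Sym2.mk_isDiag_iff.2 hfcol)] at hφ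
      exact Fin.castAdd_injective a b hφ
    exact hQ₁.2 s(v.1, w.1) ((G₁.mem_edgeSet).2 hA₁) s(x.1, y.1)
      ((G₁.mem_edgeSet).2 hfG₁) hφ'
      ⟨v.1, w.1, x.1, y.1, rfl, rfl, Or.inl ⟨l1, l2, l3⟩⟩
  · -- e is a G₂-edge
    have hAB : v.2 ≠ w.2 := hA₂.ne
    have hediag : ¬ (Sym2.map Prod.snd s(v, w)).IsDiag := by
      rw [Sym2.map_pair_eq, Sym2.mk_isDiag_iff]; exact hAB
    by_cases hCD : x.2 = y.2
    · -- colour type mismatch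
      simp only [stmt13_phi, Sym2.map_pair_eq] at hφ
      rw [if_neg (by rw [Sym2.mk_isDiag_iff]; exact hAB),
        if_pos (Sym2.mk_isDiag_iff.2 hCD)] at hφ
      have := congrArg Fin.val hφ
      simp [Fin.natAdd, Fin.castAdd, Fin.castLE] at this
      omega
    · -- f is a G₂-edge
      obtain ⟨hA₂', hu'⟩ : G₂.Adj x.2 y.2 ∧ x.1 = y.1 := by
        rcases hf with ⟨-, h⟩ | h
        · exact absurd h hCD
        · exact h
      have hφ' : φ₂ s(v.2, w.2) = φ₂ s(x.2, y.2) := by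
        simp only [stmt13_phi, Sym2.map_pair_eq] at hφ
        rw [if_neg (by rw [Sym2.mk_isDiag_iff]; exact hAB),
          if_neg (by rw [Sym2.mk_isDiag_iff]; exact hCD)] at hφ
        have := congrArg Fin.val hφ
        simp only [Fin.natAdd] at this
        exact Fin.ext (by omega)
      have ltCD : lt₂ x.2 y.2 := by
        rcases h2 with h | ⟨h, -⟩
        · exact h
        · exact absurd h hCD
      rcases h1 with hAC | ⟨hAC, hvx1⟩ <;> rcases h3 with hDB | ⟨hDB, hyw1⟩
      · exact hQ₂.1.2 s(v.2, w.2) ((G₂.mem_edgeSet).2 hA₂) s(x.2, y.2)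
          ((G₂.mem_edgeSet).2 hA₂') hφ'
          ⟨v.2, w.2, x.2, y.2, rfl, rfl, Or.inl ⟨hAC, ltCD, hDB⟩⟩
      · -- A ≺ C, D = B : strictness at B = w.2
        refine hQ₂.2 w.2 v.2 x.2 hA₂.symm (by rw [← hDB]; exact hA₂'.symm)
          (Or.inr ⟨hAC, by rw [← hDB]; exact ltCD⟩) ?_
        calc φ₂ s(w.2, v.2) = φ₂ s(v.2, w.2) := by rw [Sym2.eq_swap]
          _ = φ₂ s(x.2, y.2) := hφ'
          _ = φ₂ s(w.2, x.2) := by rw [hDB, Sym2.eq_swap]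
      · -- A = C, D ≺ B : strictness at A = v.2
        refine hQ₂.2 v.2 y.2 w.2 (by rw [hAC]; exact hA₂') hA₂
          (Or.inl ⟨by rw [hAC]; exact ltCD, hDB⟩) ?_
        calc φ₂ s(v.2, y.2) = φ₂ s(x.2, y.2) := by rw [hAC]
          _ = φ₂ s(v.2, w.2) := hφ'.symm
      · -- A = C, D = B : lt₁ contradiction
        have hxv : lt₁ x.1 v.1 := by rw [hu', hu]; exact hyw1
        exact irrefl_of lt₁ _ (trans_of lt₁ hvx1 hxv)


/-- `qn(G₁ □ G₂) ≤ qn(G₁) + sqn(G₂)` for all finite graphs `G₁, G₂`. -/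
theorem stmt13 {V₁ V₂ : Type*} [Fintype V₁] [Fintype V₂]
    (G₁ : SimpleGraph V₁) (G₂ : SimpleGraph V₂) :
    queueNumber (G₁ □ G₂) ≤ queueNumber G₁ + strictQueueNumber G₂ := by
  classical
  have hS₁ : {k | ∃ (lt : V₁ → V₁ → Prop) (φ : Sym2 V₁ → Fin k),
      IsQueueLayout G₁ lt φ}.Nonempty := by
    obtain ⟨k, lt, φ, h⟩ := stmt13_exists_strict G₁
    exact ⟨k, lt, φ, h.1⟩
  have hS₂ := stmt13_exists_strict G₂
  obtain ⟨lt₁, φ₁, hQ₁⟩ := Nat.sInf_mem hS₁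
  obtain ⟨lt₂, φ₂, hQ₂⟩ := Nat.sInf_mem hS₂
  apply Nat.sInf_le
  refine ⟨stmt13_lt lt₁ lt₂, stmt13_phi φ₁ φ₂, stmt13_sto hQ₁.1 hQ₂.1.1, ?_⟩
  rintro e he f hf hφ ⟨v, w, x, y, hev, hfx, ⟨c1, c2, c3⟩ | ⟨c1, c2, c3⟩⟩
  · exact stmt13_key hQ₁ hQ₂ e f he hf hφ v w x y hev hfx c1 c2 c3
  · exact stmt13_key hQ₁ hQ₂ f e hf he hφ.symm x y v w hfx hev c1 c2 c3
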